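/- The coefficients M_n = (2·3ⁿ / ((n+1)(n+2))) · C(2n, n) satisfy the asymptotic estimate M_n ~ (2/√π) · n^{−5/2} · 12ⁿ as n → ∞, i.e., lim_{n→∞} M_n · n^{5/2} · 12^{−n} = 2/√π. -/

import Mathlib

open Filter

open Real Stirling Nat
lemma central_ratio (n : ℕ) (hn : 1 ≤ n) :
    (Nat.choose (2*n) n : ℝ) = stirlingSeq (2*n) / (stirlingSeq n)^2 * 4^n / Real.sqrt n := by
  have hnR : (0:ℝ) < n := by exact_mod_cast hn
  have hsn : (0:ℝ) < Real.sqrt (2*n) := Real.sqrt_pos.mpr (by positivity)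
  have hy : (0:ℝ) < Real.sqrt n := Real.sqrt_pos.mpr hnR
  have hen : (0:ℝ) < ((n:ℝ) / Real.exp 1) ^ n := by positivity
  have hf : (0:ℝ) < (n ! : ℝ) := by exact_mod_cast n.factorial_pos
  have hcast : ((Nat.choose (2*n) n : ℕ) : ℝ) = ((2*n)! : ℝ) / ((n ! : ℝ) * (n ! : ℝ)) := by
    rw [Nat.cast_choose ℝ (by omega : n ≤ 2*n)]
    congr 2
    · norm_num [two_mul]
  have s4 : Real.sqrt (2*(2*n:ℕ):ℝ) = 2 * Real.sqrt n := by
    push_cast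
    rw [show (2*(2*(n:ℝ))) = 2^2 * n by ring,
      Real.sqrt_mul (by positivity), Real.sqrt_sq (by norm_num)]
  have e4 : (((2*n:ℕ):ℝ) / Real.exp 1) ^ (2*n) = 4^n * (((n:ℝ) / Real.exp 1) ^ n)^2 := by
    push_cast
    rw [show (2*(n:ℝ))/Real.exp 1 = 2 * ((n:ℝ)/Real.exp 1) by ring, mul_pow, ← pow_mul,
      show (2:ℝ)^(2*n) = 4^n by rw [pow_mul]; norm_num]
    ring
  have q2 : Real.sqrt 2 * Real.sqrt 2 = 2 := Real.mul_self_sqrt (by norm_num)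
  rw [hcast, stirlingSeq, stirlingSeq, s4, e4]
  have h2n : ((2*n)! : ℝ) ≠ 0 := by positivity
  field_simp
  linear_combination 2 * Real.sq_sqrt hnR.le - Real.sq_sqrt (by positivity : (0:ℝ) ≤ 2 * n)

/-- The numbers `Mₙ = 2·3ⁿ/((n+1)(n+2)) · C(2n,n)` of rooted
planar maps with `n` edges satisfy `Mₙ ~ (2/√π) · n^{−5/2} · 12ⁿ`, i.e.
`Mₙ · n^{5/2} · 12^{−n} → 2/√π` as `n → ∞`. -/
theorem maps_asymptotics :
    Filter.Tendsto
      (fun n : ℕ =>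
        (2 * 3 ^ n / ((n + 1) * (n + 2)) * Nat.choose (2 * n) n : ℝ)
          * (n : ℝ) ^ ((5 : ℝ) / 2) / 12 ^ n)
      Filter.atTop (nhds (2 / Real.sqrt Real.pi)) := by
  have hpi : Real.sqrt Real.pi ≠ 0 := by positivity
  have h1 : Tendsto stirlingSeq atTop (nhds (Real.sqrt Real.pi)) :=
    Stirling.tendsto_stirlingSeq_sqrt_pi
  have h2 : Tendsto (fun n : ℕ => stirlingSeq (2*n)) atTop (nhds (Real.sqrt Real.pi)) :=
    h1.comp (Filter.tendsto_atTop_atTop.mpr fun b => ⟨b, fun a ha => by omega⟩)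
  have h3 : Tendsto (fun n : ℕ => stirlingSeq (2*n) / (stirlingSeq n)^2) atTop
      (nhds (Real.sqrt Real.pi / (Real.sqrt Real.pi)^2)) :=
    h2.div (h1.pow 2) (by positivity)
  have h4 : Tendsto (fun n : ℕ => ((n:ℝ)/(n+1)) * ((n:ℝ)/(n+2))) atTop (nhds (1*1)) :=
    (tendsto_natCast_div_add_atTop (1:ℝ)).mul (tendsto_natCast_div_add_atTop (2:ℝ))
  have h5 : Tendsto (fun n : ℕ => (stirlingSeq (2*n) / (stirlingSeq n)^2) *
      (2 * (((n:ℝ)/(n+1)) * ((n:ℝ)/(n+2))))) atTop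
      (nhds (Real.sqrt Real.pi / (Real.sqrt Real.pi)^2 * (2 * (1*1)))) :=
    h3.mul (tendsto_const_nhds.mul h4)
  have hlim : Real.sqrt Real.pi / (Real.sqrt Real.pi)^2 * (2 * (1*1))
      = 2 / Real.sqrt Real.pi := by
    rw [sq]; field_simp
  rw [← hlim]
  apply h5.congr'
  filter_upwards [eventually_ge_atTop 1] with n hn
  have hnR : (0:ℝ) < n := by exact_mod_cast hn
  have hy : (0:ℝ) < Real.sqrt n := Real.sqrt_pos.mpr hnR
  rw [central_ratio n hn]
  have hr : (n:ℝ) ^ ((5:ℝ)/2) = (n:ℝ)^2 * Real.sqrt n := by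
    rw [show (5:ℝ)/2 = ((2:ℕ):ℝ) + 1/2 by norm_num, Real.rpow_add hnR,
      Real.rpow_natCast, ← Real.sqrt_eq_rpow]
  rw [hr]
  have h12 : (12:ℝ)^n = 3^n * 4^n := by rw [← mul_pow]; norm_num
  rw [h12]
  have hsp : 0 < stirlingSeq n := by
    rw [stirlingSeq]
    refine div_pos (by exact_mod_cast n.factorial_pos) (mul_pos ?_ ?_)
    · exact Real.sqrt_pos.mpr (by positivity)
    · positivity
  have key : (stirlingSeq (2*n) / (stirlingSeq n)^2 * 4^n / Real.sqrt n) * ((n:ℝ)^2 * Real.sqrt n)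
      = stirlingSeq (2*n) / (stirlingSeq n)^2 * 4^n * (n:ℝ)^2 := by
    field_simp [hy.ne', hsp.ne']
  rw [mul_assoc, key]
  have hn1 : (n:ℝ) + 1 ≠ 0 := by positivity
  have hn2 : (n:ℝ) + 2 ≠ 0 := by positivity
  have h3n : (3:ℝ)^n ≠ 0 := by positivity
  have h4n : (4:ℝ)^n ≠ 0 := by positivity
  field_simp [hsp.ne']
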